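/- For the λ-return ratio random walk on the Sierpiński graph with λ ∈ (0,1), the Green function at the root is G(o,o) = 1/(1-λ) and the hitting probability of the root satisfies F(x,o) = λ^{|x|} for every vertex x. -/

import Mathlib

open scoped ENNReal

noncomputable section
open Classical

/-- The three vertices of the initial triangle. -/
def sgPt : Fin 3 → ℝ × ℝ
  | 0 => (0, 0)
  | 1 => (1, 0)
  | 2 => (1/2, Real.sqrt 3 / 2)

/-- The contraction maps of the Sierpiński gasket IFS. -/
def sgMap (i : Fin 3) (x : ℝ × ℝ) : ℝ × ℝ :=
  ((x.1 + (sgPt i).1) / 2, (x.2 + (sgPt i).2) / 2)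

/-- The vertex sets `V_n`. -/
def sgV : ℕ → Set (ℝ × ℝ)
  | 0 => {sgPt 0, sgPt 1, sgPt 2}
  | (n+1) => ⋃ i : Fin 3, sgMap i '' sgV n

/-- The Sierpiński gasket `K`, closure of `⋃ n, V_n`. -/
def SG : Set (ℝ × ℝ) := closure (⋃ n, sgV n)

/-- A vertex of the Sierpiński graph: a finite word over `{0,1,2}`; the root is `[]`. -/
abbrev Word := List (Fin 3)

/-- `f_w = f_{w₁} ∘ ⋯ ∘ f_{w_n}`. -/
def wordMap (w : Word) : ℝ × ℝ → ℝ × ℝ := w.foldr (fun i g => sgMap i ∘ g) id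

/-- The cell `K_w = f_w(K)`. -/
def cell (w : Word) : Set (ℝ × ℝ) := wordMap w '' SG

/-- `p_w = f_{w₁…w_{n-1}}(p_{w_n})` for a nonempty word `w`. -/
def wordPt (w : Word) : ℝ × ℝ :=
  match w.getLast? with
  | none => sgPt 0
  | some i => wordMap w.dropLast (sgPt i)

/-- The conductances of the λ-return ratio random walk on the Sierpiński graph:
vertical edges `(w, w⁻)` get `(3λ)^{-|w⁻|}`; horizontal edges (same length, intersecting
cells) get `C₁(3λ)^{-n}` (type I, `p_x ≠ p_y`) or `C₂(3λ)^{-n}` (type II, `p_x = p_y`). -/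
def sgCond (lam C1 C2 : ℝ) (x y : Word) : ℝ :=
  if x ≠ [] ∧ y = x.dropLast then (1/(3*lam)) ^ y.length
  else if y ≠ [] ∧ x = y.dropLast then (1/(3*lam)) ^ x.length
  else if x.length = y.length ∧ x ≠ y ∧ (cell x ∩ cell y).Nonempty then
    (if wordPt x = wordPt y then C2 else C1) * (1/(3*lam)) ^ x.length
  else 0

/-- `π(x) = ∑_y c(x,y)`. -/
def sgPi (lam C1 C2 : ℝ) (x : Word) : ℝ := ∑' y : Word, sgCond lam C1 C2 x y

/-- Transition probability `P(x,y) = c(x,y)/π(x)`. -/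
def sgP (lam C1 C2 : ℝ) (x y : Word) : ℝ≥0∞ :=
  ENNReal.ofReal (sgCond lam C1 C2 x y / sgPi lam C1 C2 x)

/-- `n`-step transition probabilities. -/
def sgPk (lam C1 C2 : ℝ) : ℕ → Word → Word → ℝ≥0∞
  | 0 => fun x y => if x = y then 1 else 0
  | (n+1) => fun x y => ∑' z : Word, sgP lam C1 C2 x z * sgPk lam C1 C2 n z y

/-- Green function `G(x,y) = ∑_n P^{(n)}(x,y)`. -/
def sgG (lam C1 C2 : ℝ) (x y : Word) : ℝ≥0∞ := ∑' n : ℕ, sgPk lam C1 C2 n x y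

/-- Probability of first hitting the root `o = []` at time `n`. -/
def sgFk (lam C1 C2 : ℝ) : ℕ → Word → ℝ≥0∞
  | 0 => fun x => if x = [] then 1 else 0
  | (n+1) => fun x => if x = [] then 0 else ∑' y : Word, sgP lam C1 C2 x y * sgFk lam C1 C2 n y

/-- Probability `F(x,o)` of ever hitting the root `o = []` starting from `x`. -/
def sgF (lam C1 C2 : ℝ) (x : Word) : ℝ≥0∞ := ∑' n : ℕ, sgFk lam C1 C2 n x

section Aux
variable {lam C1 C2 : ℝ}

lemma cond_nonneg (hl0 : 0 < lam) (hC1 : 0 < C1) (hC2 : 0 < C2) (x y : Word) :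
    0 ≤ sgCond lam C1 C2 x y := by
  have hb : (0:ℝ) ≤ 1/(3*lam) := le_of_lt (by positivity)
  unfold sgCond
  split_ifs <;>
    first
    | exact pow_nonneg hb _
    | exact mul_nonneg (le_of_lt hC2) (pow_nonneg hb _)
    | exact mul_nonneg (le_of_lt hC1) (pow_nonneg hb _)
    | exact le_refl 0

lemma cond_ne_zero_cases {x z : Word} (h : sgCond lam C1 C2 x z ≠ 0) :
    (x ≠ [] ∧ z = x.dropLast) ∨ (z ≠ [] ∧ x = z.dropLast) ∨
      (x.length = z.length ∧ x ≠ z) := by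
  unfold sgCond at h
  split_ifs at h with h1 h2 h3 h4
  exacts [Or.inl h1, Or.inr (Or.inl h2), Or.inr (Or.inr ⟨h3.1, h3.2.1⟩),
    Or.inr (Or.inr ⟨h3.1, h3.2.1⟩), absurd rfl h]

lemma cond_eq_zero_of_length {x z : Word} (h : x.length + 1 < z.length) :
    sgCond lam C1 C2 x z = 0 := by
  by_contra hc
  rcases cond_ne_zero_cases hc with ⟨hx, hz⟩ | ⟨hz, hx⟩ | ⟨hl, _⟩
  · have := congrArg List.length hz
    simp [List.length_dropLast] at this
    omega
  · have := congrArg List.length hx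
    have hzp : 0 < z.length := List.length_pos_iff.mpr hz
    simp [List.length_dropLast] at this
    omega
  · omega

def condFinset (x : Word) : Finset Word :=
  (List.finite_length_le (Fin 3) (x.length + 1)).toFinset

lemma not_mem_condFinset {x z : Word} (h : z ∉ condFinset x) :
    sgCond lam C1 C2 x z = 0 := by
  apply cond_eq_zero_of_length
  have : ¬ z.length ≤ x.length + 1 := by
    simpa [condFinset, Set.Finite.mem_toFinset] using h
  omega

lemma summable_cond_mul (x : Word) (f : Word → ℝ)
    (hf : ∀ z, sgCond lam C1 C2 x z = 0 → f z = 0) : Summable f :=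
  summable_of_ne_finset_zero (s := condFinset x) fun z hz => hf z (not_mem_condFinset hz)

lemma cond_summable (x : Word) : Summable (fun z => sgCond lam C1 C2 x z) :=
  summable_cond_mul x _ (fun _ h => h)

lemma cond_concat (hl0 : 0 < lam) (x : Word) (i : Fin 3) :
    sgCond lam C1 C2 x (x ++ [i]) = (1/(3*lam)) ^ x.length := by
  unfold sgCond
  rw [if_neg, if_pos]
  · exact ⟨by simp, by simp⟩
  · rintro ⟨hx, h⟩
    have hxp : 0 < x.length := List.length_pos_iff.mpr hx
    have := congrArg List.length h
    simp [List.length_dropLast] at this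
    omega

lemma cond_dropLast (x : Word) (hx : x ≠ []) :
    sgCond lam C1 C2 x x.dropLast = (1/(3*lam)) ^ (x.length - 1) := by
  unfold sgCond
  rw [if_pos ⟨hx, rfl⟩, List.length_dropLast]

lemma pi_pos (hl0 : 0 < lam) (hC1 : 0 < C1) (hC2 : 0 < C2) (x : Word) :
    0 < sgPi lam C1 C2 x := by
  have hb : (0:ℝ) < (1/(3*lam)) ^ x.length := by positivity
  have hle : sgCond lam C1 C2 x (x ++ [(0 : Fin 3)]) ≤ sgPi lam C1 C2 x :=
    Summable.le_tsum (cond_summable x) _ (fun z _ => cond_nonneg hl0 hC1 hC2 x z)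
  rw [cond_concat hl0] at hle
  exact lt_of_lt_of_le hb hle

end Aux

section Aux2
variable {lam C1 C2 : ℝ}

/-- The harmonic value `e(x)`. -/
def hstep (lam : ℝ) (x : Word) : ℝ := if x = [] then lam else lam ^ x.length

lemma balance_zero (hl0 : 0 < lam) (x : Word) :
    ∑' z : Word, sgCond lam C1 C2 x z * (lam ^ z.length - hstep lam x) = 0 := by
  by_cases hx : x = []
  · subst hx
    have : ∀ z : Word, sgCond lam C1 C2 [] z * (lam ^ z.length - hstep lam []) = 0 := by
      intro z
      by_cases hc : sgCond lam C1 C2 [] z = 0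
      · rw [hc, zero_mul]
      · rcases cond_ne_zero_cases hc with ⟨hne, _⟩ | ⟨hz, hd⟩ | ⟨hl, hne⟩
        · exact absurd rfl hne
        · have hzp : 0 < z.length := List.length_pos_iff.mpr hz
          have := congrArg List.length hd
          simp [List.length_dropLast] at this
          have hz1 : z.length = 1 := by omega
          simp [hstep, hz1]
        · have : z = [] := List.length_eq_zero_iff.mp hl.symm
          exact absurd this.symm hne
    rw [tsum_congr this, tsum_zero]
  · -- x ≠ [] : support is {x.dropLast, x++[0], x++[1], x++[2]}
    have hxp : 0 < x.length := List.length_pos_iff.mpr hx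
    obtain ⟨m, hm⟩ : ∃ m, x.length = m + 1 := ⟨x.length - 1, by omega⟩
    set T : Finset Word := {x.dropLast, x ++ [0], x ++ [1], x ++ [2]} with hT
    have hsupp : ∀ z ∉ T,
        sgCond lam C1 C2 x z * (lam ^ z.length - hstep lam x) = 0 := by
      intro z hz
      by_cases hc : sgCond lam C1 C2 x z = 0
      · rw [hc, zero_mul]
      · rcases cond_ne_zero_cases hc with ⟨_, hd⟩ | ⟨hzne, hd⟩ | ⟨hl, _⟩
        · exact absurd (by simp [hT, hd]) hz
        · have hzeq : x ++ [z.getLast hzne] = z := by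
            rw [hd]; exact List.dropLast_append_getLast hzne
          have h3 : z.getLast hzne = 0 ∨ z.getLast hzne = 1 ∨ z.getLast hzne = 2 := by
            omega
          exfalso; apply hz
          rcases h3 with h | h | h <;>
            · rw [h] at hzeq
              simp [hT, ← hzeq]
        · rw [hstep, if_neg hx, ← hl, sub_self, mul_zero]
    rw [tsum_eq_sum hsupp]
    have hne1 : x.dropLast ∉ ({x ++ [0], x ++ [1], x ++ [2]} : Finset Word) := by
      simp only [Finset.mem_insert, Finset.mem_singleton]
      push_neg
      refine ⟨?_, ?_, ?_⟩ <;>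
        · intro h
          have := congrArg List.length h
          simp only [List.length_dropLast, List.length_append, List.length_singleton] at this
          omega
    have hne2 : x ++ [(0:Fin 3)] ∉ ({x ++ [1], x ++ [2]} : Finset Word) := by simp
    have hne3 : x ++ [(1:Fin 3)] ∉ ({x ++ [2]} : Finset Word) := by simp
    rw [hT, Finset.sum_insert hne1, Finset.sum_insert hne2, Finset.sum_insert hne3,
      Finset.sum_singleton]
    rw [cond_dropLast x hx, cond_concat hl0, cond_concat hl0, cond_concat hl0]
    simp only [hstep, if_neg hx, List.length_dropLast, List.length_append,
      List.length_singleton, hm]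
    have h3 : (3:ℝ) * lam ≠ 0 := by positivity
    have hmm : m + 1 - 1 = m := by omega
    rw [hmm]
    field_simp
    linear_combination (lam ^ m * lam⁻¹ ^ m * (1/3:ℝ) ^ m * (lam - 1)) * mul_inv_cancel₀ hl0.ne'
end Aux2

section Aux3
variable {lam C1 C2 : ℝ}

lemma cond_balance (hl0 : 0 < lam) (hC1 : 0 < C1) (hC2 : 0 < C2) (x : Word) :
    ∑' z : Word, sgCond lam C1 C2 x z * lam ^ z.length
      = hstep lam x * sgPi lam C1 C2 x := by
  have hs1 : Summable (fun z : Word =>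
      sgCond lam C1 C2 x z * (lam ^ z.length - hstep lam x)) :=
    summable_cond_mul x _ (fun z hz => by rw [hz, zero_mul])
  have hs2 : Summable (fun z : Word => sgCond lam C1 C2 x z * hstep lam x) :=
    summable_cond_mul x _ (fun z hz => by rw [hz, zero_mul])
  have key : ∀ z : Word, sgCond lam C1 C2 x z * lam ^ z.length
      = sgCond lam C1 C2 x z * (lam ^ z.length - hstep lam x)
        + sgCond lam C1 C2 x z * hstep lam x := by
    intro z; ring
  rw [tsum_congr key, Summable.tsum_add hs1 hs2, balance_zero hl0, zero_add,
    tsum_mul_right, mul_comm]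
  rfl

lemma sgP_sum_one (hl0 : 0 < lam) (hC1 : 0 < C1) (hC2 : 0 < C2) (x : Word) :
    ∑' z : Word, sgP lam C1 C2 x z = 1 := by
  have hπ : 0 < sgPi lam C1 C2 x := pi_pos hl0 hC1 hC2 x
  unfold sgP
  rw [← ENNReal.ofReal_tsum_of_nonneg
    (fun z => div_nonneg (cond_nonneg hl0 hC1 hC2 x z) hπ.le)
    ((cond_summable x).div_const _)]
  have : ∑' z : Word, sgCond lam C1 C2 x z / sgPi lam C1 C2 x
      = sgPi lam C1 C2 x / sgPi lam C1 C2 x := tsum_div_const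
  rw [this, div_self hπ.ne', ENNReal.ofReal_one]

lemma sgP_harmonic (hl0 : 0 < lam) (hC1 : 0 < C1) (hC2 : 0 < C2) (x : Word) :
    ∑' z : Word, sgP lam C1 C2 x z * ENNReal.ofReal (lam ^ z.length)
      = ENNReal.ofReal (hstep lam x) := by
  have hπ : 0 < sgPi lam C1 C2 x := pi_pos hl0 hC1 hC2 x
  have h1 : ∀ z : Word, sgP lam C1 C2 x z * ENNReal.ofReal (lam ^ z.length)
      = ENNReal.ofReal (sgCond lam C1 C2 x z * lam ^ z.length / sgPi lam C1 C2 x) := by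
    intro z
    rw [sgP, ← ENNReal.ofReal_mul (div_nonneg (cond_nonneg hl0 hC1 hC2 x z) hπ.le)]
    congr 1; ring
  rw [tsum_congr h1, ← ENNReal.ofReal_tsum_of_nonneg
    (fun z => div_nonneg (mul_nonneg (cond_nonneg hl0 hC1 hC2 x z)
      (pow_nonneg hl0.le _)) hπ.le)
    (Summable.div_const (summable_cond_mul x _ (fun z hz => by rw [hz, zero_mul])) _)]
  rw [tsum_div_const, cond_balance hl0 hC1 hC2, mul_div_assoc, div_self hπ.ne', mul_one]

end Aux3

section Aux4
variable {lam C1 C2 : ℝ}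

lemma sgPk_succ (n : ℕ) (x y : Word) :
    sgPk lam C1 C2 (n+1) x y = ∑' z : Word, sgP lam C1 C2 x z * sgPk lam C1 C2 n z y := rfl

lemma sgPk_zero (x y : Word) : sgPk lam C1 C2 0 x y = if x = y then 1 else 0 := rfl

lemma sgPk_one (x y : Word) : sgPk lam C1 C2 1 x y = sgP lam C1 C2 x y := by
  rw [sgPk_succ, tsum_eq_single y]
  · rw [sgPk_zero, if_pos rfl, mul_one]
  · intro z hz
    rw [sgPk_zero, if_neg hz, mul_zero]

lemma sgPk_add (n m : ℕ) (x y : Word) :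
    sgPk lam C1 C2 (n + m) x y
      = ∑' z : Word, sgPk lam C1 C2 n x z * sgPk lam C1 C2 m z y := by
  induction n generalizing x with
  | zero =>
    rw [Nat.zero_add, tsum_eq_single x]
    · rw [sgPk_zero, if_pos rfl, one_mul]
    · intro z hz
      rw [sgPk_zero, if_neg (Ne.symm hz), zero_mul]
  | succ n ih =>
    have : n + 1 + m = (n + m) + 1 := by omega
    rw [this, sgPk_succ]
    calc ∑' z : Word, sgP lam C1 C2 x z * sgPk lam C1 C2 (n + m) z y
        = ∑' z : Word, sgP lam C1 C2 x z *
            ∑' w : Word, sgPk lam C1 C2 n z w * sgPk lam C1 C2 m w y := by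
          exact tsum_congr fun z => by rw [ih]
      _ = ∑' z : Word, ∑' w : Word,
            sgP lam C1 C2 x z * sgPk lam C1 C2 n z w * sgPk lam C1 C2 m w y := by
          exact tsum_congr fun z => by
            rw [← ENNReal.tsum_mul_left]; exact tsum_congr fun w => by ring
      _ = ∑' w : Word, ∑' z : Word,
            sgP lam C1 C2 x z * sgPk lam C1 C2 n z w * sgPk lam C1 C2 m w y :=
          ENNReal.tsum_comm
      _ = ∑' w : Word, (∑' z : Word, sgP lam C1 C2 x z * sgPk lam C1 C2 n z w)
            * sgPk lam C1 C2 m w y := by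
          exact tsum_congr fun w => ENNReal.tsum_mul_right
      _ = ∑' z : Word, sgPk lam C1 C2 (n+1) x z * sgPk lam C1 C2 m z y := by
          exact tsum_congr fun w => by rw [sgPk_succ]

lemma sgPk_mass (hl0 : 0 < lam) (hC1 : 0 < C1) (hC2 : 0 < C2) :
    ∀ (n : ℕ) (x : Word), ∑' y : Word, sgPk lam C1 C2 n x y ≤ 1 := by
  intro n
  induction n with
  | zero =>
    intro x
    rw [tsum_eq_single x (fun z hz => by rw [sgPk_zero, if_neg (fun h => hz h.symm)]),
      sgPk_zero, if_pos rfl]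
  | succ n ih =>
    intro x
    calc ∑' y : Word, sgPk lam C1 C2 (n+1) x y
        = ∑' y : Word, ∑' z : Word, sgP lam C1 C2 x z * sgPk lam C1 C2 n z y :=
          tsum_congr fun y => rfl
      _ = ∑' z : Word, ∑' y : Word, sgP lam C1 C2 x z * sgPk lam C1 C2 n z y :=
          ENNReal.tsum_comm
      _ = ∑' z : Word, sgP lam C1 C2 x z * ∑' y : Word, sgPk lam C1 C2 n z y :=
          tsum_congr fun z => ENNReal.tsum_mul_left
      _ ≤ ∑' z : Word, sgP lam C1 C2 x z * 1 :=
          ENNReal.tsum_le_tsum fun z => mul_le_mul_right (ih z) _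
      _ = 1 := by simpa [mul_one] using sgP_sum_one hl0 hC1 hC2 x

lemma sgPk_le_one (hl0 : 0 < lam) (hC1 : 0 < C1) (hC2 : 0 < C2) (n : ℕ) (x y : Word) :
    sgPk lam C1 C2 n x y ≤ 1 :=
  le_trans (ENNReal.le_tsum y) (sgPk_mass hl0 hC1 hC2 n x)

end Aux4

/-- expected value of `λ^{|X_n|}` -/
def hE (lam C1 C2 : ℝ) (x : Word) (n : ℕ) : ℝ≥0∞ :=
  ∑' y : Word, sgPk lam C1 C2 n x y * ENNReal.ofReal (lam ^ y.length)

section Aux5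
variable {lam C1 C2 : ℝ}

lemma hE_zero (x : Word) : hE lam C1 C2 x 0 = ENNReal.ofReal (lam ^ x.length) := by
  unfold hE
  rw [tsum_eq_single x (fun z hz => by rw [sgPk_zero, if_neg (Ne.symm hz), zero_mul]),
    sgPk_zero, if_pos rfl, one_mul]

lemma hE_step (hl0 : 0 < lam) (hl1 : lam < 1) (hC1 : 0 < C1) (hC2 : 0 < C2)
    (x : Word) (n : ℕ) :
    hE lam C1 C2 x n
      = hE lam C1 C2 x (n+1) + sgPk lam C1 C2 n x [] * ENNReal.ofReal (1 - lam) := by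
  have hsucc : ∀ y : Word, sgPk lam C1 C2 (n+1) x y
      = ∑' z : Word, sgPk lam C1 C2 n x z * sgP lam C1 C2 z y := by
    intro y
    rw [show n + 1 = n + 1 from rfl, sgPk_add n 1 x y]
    exact tsum_congr fun z => by rw [sgPk_one]
  have key : hE lam C1 C2 x (n+1)
      = ∑' z : Word, sgPk lam C1 C2 n x z * ENNReal.ofReal (hstep lam z) := by
    unfold hE
    calc ∑' y : Word, sgPk lam C1 C2 (n+1) x y * ENNReal.ofReal (lam ^ y.length)
        = ∑' y : Word, ∑' z : Word, sgPk lam C1 C2 n x z * sgP lam C1 C2 z y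
            * ENNReal.ofReal (lam ^ y.length) := by
          exact tsum_congr fun y => by rw [hsucc y, ENNReal.tsum_mul_right]
      _ = ∑' z : Word, ∑' y : Word, sgPk lam C1 C2 n x z * sgP lam C1 C2 z y
            * ENNReal.ofReal (lam ^ y.length) := ENNReal.tsum_comm
      _ = ∑' z : Word, sgPk lam C1 C2 n x z
            * ∑' y : Word, sgP lam C1 C2 z y * ENNReal.ofReal (lam ^ y.length) := by
          refine tsum_congr fun z => ?_
          rw [← ENNReal.tsum_mul_left]
          exact tsum_congr fun y => by ring
      _ = ∑' z : Word, sgPk lam C1 C2 n x z * ENNReal.ofReal (hstep lam z) :=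
          tsum_congr fun z => by rw [sgP_harmonic hl0 hC1 hC2]
  have split1 : hE lam C1 C2 x (n+1)
      = sgPk lam C1 C2 n x [] * ENNReal.ofReal lam
        + ∑' z : Word, if z = [] then 0
            else sgPk lam C1 C2 n x z * ENNReal.ofReal (lam ^ z.length) := by
    rw [key, ENNReal.tsum_eq_add_tsum_ite ([] : Word)]
    have h1 : ENNReal.ofReal (hstep lam ([] : Word)) = ENNReal.ofReal lam := by simp [hstep]
    rw [h1]
    exact congrArg (fun t => sgPk lam C1 C2 n x [] * ENNReal.ofReal lam + t)
      (tsum_congr fun z => by by_cases hz : z = [] <;> simp [hz, hstep])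
  have split2 : hE lam C1 C2 x n
      = sgPk lam C1 C2 n x [] * 1
        + ∑' z : Word, if z = [] then 0
            else sgPk lam C1 C2 n x z * ENNReal.ofReal (lam ^ z.length) := by
    unfold hE
    rw [ENNReal.tsum_eq_add_tsum_ite ([] : Word)]
    have h1 : sgPk lam C1 C2 n x [] * ENNReal.ofReal (lam ^ (List.length ([] : Word)))
        = sgPk lam C1 C2 n x [] * 1 := by simp
    rw [h1]
    exact congrArg (fun t => sgPk lam C1 C2 n x [] * 1 + t)
      (tsum_congr fun z => by by_cases hz : z = [] <;> simp [hz])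
  rw [split1, split2]
  have hone : (1 : ℝ≥0∞) = ENNReal.ofReal lam + ENNReal.ofReal (1 - lam) := by
    rw [← ENNReal.ofReal_add hl0.le (by linarith), add_sub_cancel, ENNReal.ofReal_one]
  rw [hone]
  ring

lemma hE_sum (hl0 : 0 < lam) (hl1 : lam < 1) (hC1 : 0 < C1) (hC2 : 0 < C2)
    (x : Word) (n : ℕ) :
    ENNReal.ofReal (lam ^ x.length)
      = hE lam C1 C2 x n
        + ENNReal.ofReal (1 - lam) * ∑ k ∈ Finset.range n, sgPk lam C1 C2 k x [] := by
  induction n with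
  | zero => simp [hE_zero]
  | succ n ih =>
    rw [ih, hE_step hl0 hl1 hC1 hC2 x n, Finset.sum_range_succ]
    ring

lemma G_bound (hl0 : 0 < lam) (hl1 : lam < 1) (hC1 : 0 < C1) (hC2 : 0 < C2) (x : Word) :
    ENNReal.ofReal (1 - lam) * sgG lam C1 C2 x []
      ≤ ENNReal.ofReal (lam ^ x.length) := by
  rw [sgG, ENNReal.tsum_eq_iSup_nat, ENNReal.mul_iSup]
  refine iSup_le fun n => ?_
  rw [hE_sum hl0 hl1 hC1 hC2 x n]
  exact le_add_self

lemma G_ne_top (hl0 : 0 < lam) (hl1 : lam < 1) (hC1 : 0 < C1) (hC2 : 0 < C2) (x : Word) :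
    sgG lam C1 C2 x [] ≠ ⊤ := by
  intro h
  have := G_bound hl0 hl1 hC1 hC2 x
  rw [h, ENNReal.mul_top (by simp [ENNReal.ofReal_eq_zero]; linarith)] at this
  exact (ENNReal.ofReal_lt_top.trans_le this).false

end Aux5

section Aux6
variable {lam C1 C2 : ℝ}
open Filter

lemma sgP_parent_pos (hl0 : 0 < lam) (hC1 : 0 < C1) (hC2 : 0 < C2)
    {x : Word} (hx : x ≠ []) : 0 < sgP lam C1 C2 x x.dropLast := by
  rw [sgP, ENNReal.ofReal_pos]
  apply div_pos _ (pi_pos hl0 hC1 hC2 x)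
  rw [cond_dropLast x hx]
  positivity

lemma sgPk_root_pos (hl0 : 0 < lam) (hC1 : 0 < C1) (hC2 : 0 < C2) :
    ∀ (m : ℕ) (y : Word), y.length = m → 0 < sgPk lam C1 C2 m y [] := by
  intro m
  induction m with
  | zero =>
    intro y hy
    have : y = [] := List.length_eq_zero_iff.mp hy
    subst this
    rw [sgPk_zero, if_pos rfl]
    exact zero_lt_one
  | succ m ih =>
    intro y hy
    have hyne : y ≠ [] := by
      intro h; subst h; simp at hy
    have hd : y.dropLast.length = m := by
      rw [List.length_dropLast, hy]
      omega
    calc (0 : ℝ≥0∞)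
        < sgP lam C1 C2 y y.dropLast * sgPk lam C1 C2 m y.dropLast [] :=
          ENNReal.mul_pos (sgP_parent_pos hl0 hC1 hC2 hyne).ne'
            (ih y.dropLast hd).ne'
      _ ≤ sgPk lam C1 C2 (m+1) y [] := by
          rw [sgPk_succ]
          exact ENNReal.le_tsum y.dropLast

lemma tendsto_Pk_root (hl0 : 0 < lam) (hl1 : lam < 1) (hC1 : 0 < C1) (hC2 : 0 < C2)
    (x : Word) :
    Tendsto (fun n => sgPk lam C1 C2 n x []) atTop (nhds 0) :=
  ENNReal.tendsto_atTop_zero_of_tsum_ne_top (G_ne_top hl0 hl1 hC1 hC2 x)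

lemma tendsto_Pk (hl0 : 0 < lam) (hl1 : lam < 1) (hC1 : 0 < C1) (hC2 : 0 < C2)
    (x y : Word) :
    Tendsto (fun n => sgPk lam C1 C2 n x y) atTop (nhds 0) := by
  set m := y.length
  set c := sgPk lam C1 C2 m y [] with hc
  have hc0 : c ≠ 0 := (sgPk_root_pos hl0 hC1 hC2 m y rfl).ne'
  have hctop : c ≠ ⊤ := (lt_of_le_of_lt (sgPk_le_one hl0 hC1 hC2 m y []) (by simp)).ne
  have hb : ∀ n, sgPk lam C1 C2 n x y ≤ sgPk lam C1 C2 (n + m) x [] * c⁻¹ := by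
    intro n
    have hmul : sgPk lam C1 C2 n x y * c ≤ sgPk lam C1 C2 (n + m) x [] := by
      rw [sgPk_add n m x []]
      exact le_trans (le_of_eq rfl) (ENNReal.le_tsum y)
    rw [← ENNReal.le_div_iff_mul_le (Or.inl hc0) (Or.inl hctop)] at hmul
    rwa [div_eq_mul_inv] at hmul
  have htend : Tendsto (fun n => sgPk lam C1 C2 (n + m) x [] * c⁻¹) atTop (nhds 0) := by
    have h1 : Tendsto (fun n => sgPk lam C1 C2 (n + m) x []) atTop (nhds 0) :=
      (tendsto_Pk_root hl0 hl1 hC1 hC2 x).comp (tendsto_add_atTop_nat m)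
    have := ENNReal.Tendsto.mul_const h1 (Or.inr (ENNReal.inv_ne_top.mpr hc0))
    simpa using this
  exact tendsto_of_tendsto_of_tendsto_of_le_of_le tendsto_const_nhds htend
    (fun n => zero_le) hb

lemma hE_antitone (hl0 : 0 < lam) (hl1 : lam < 1) (hC1 : 0 < C1) (hC2 : 0 < C2)
    (x : Word) : Antitone (hE lam C1 C2 x) := by
  apply antitone_nat_of_succ_le
  intro n
  rw [hE_step hl0 hl1 hC1 hC2 x n]
  exact le_self_add

lemma hE_iInf (hl0 : 0 < lam) (hl1 : lam < 1) (hC1 : 0 < C1) (hC2 : 0 < C2)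
    (x : Word) : ⨅ n, hE lam C1 C2 x n = 0 := by
  have htend : Tendsto (hE lam C1 C2 x) atTop (nhds (⨅ n, hE lam C1 C2 x n)) :=
    tendsto_atTop_iInf (hE_antitone hl0 hl1 hC1 hC2 x)
  have hbound : ∀ N : ℕ, ⨅ n, hE lam C1 C2 x n ≤ ENNReal.ofReal (lam ^ N) := by
    intro N
    set W : Finset Word := (List.finite_length_le (Fin 3) N).toFinset with hW
    have hle : ∀ n, hE lam C1 C2 x n
        ≤ (∑ y ∈ W, sgPk lam C1 C2 n x y) + ENNReal.ofReal (lam ^ N) := by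
      intro n
      have hpt : ∀ y : Word, sgPk lam C1 C2 n x y * ENNReal.ofReal (lam ^ y.length)
          ≤ (if y ∈ W then sgPk lam C1 C2 n x y else 0)
            + ENNReal.ofReal (lam ^ N) * sgPk lam C1 C2 n x y := by
        intro y
        by_cases hy : y ∈ W
        · rw [if_pos hy]
          calc sgPk lam C1 C2 n x y * ENNReal.ofReal (lam ^ y.length)
              ≤ sgPk lam C1 C2 n x y * 1 := by
                apply mul_le_mul_right
                rw [ENNReal.ofReal_le_one]
                exact pow_le_one₀ hl0.le hl1.le
            _ ≤ _ := by rw [mul_one]; exact le_self_add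
        · have hN : N ≤ y.length := by
            have : ¬ y.length ≤ N := by simpa [hW, Set.Finite.mem_toFinset] using hy
            omega
          calc sgPk lam C1 C2 n x y * ENNReal.ofReal (lam ^ y.length)
              ≤ sgPk lam C1 C2 n x y * ENNReal.ofReal (lam ^ N) := by
                apply mul_le_mul_right
                exact ENNReal.ofReal_le_ofReal (pow_le_pow_of_le_one hl0.le hl1.le hN)
            _ = ENNReal.ofReal (lam ^ N) * sgPk lam C1 C2 n x y := mul_comm _ _
            _ ≤ _ := le_add_self
      calc hE lam C1 C2 x n
          ≤ ∑' y : Word, ((if y ∈ W then sgPk lam C1 C2 n x y else 0)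
              + ENNReal.ofReal (lam ^ N) * sgPk lam C1 C2 n x y) :=
            ENNReal.tsum_le_tsum hpt
        _ = (∑' y : Word, if y ∈ W then sgPk lam C1 C2 n x y else 0)
              + ENNReal.ofReal (lam ^ N) * ∑' y : Word, sgPk lam C1 C2 n x y := by
            rw [ENNReal.tsum_add, ENNReal.tsum_mul_left]
        _ ≤ (∑ y ∈ W, sgPk lam C1 C2 n x y) + ENNReal.ofReal (lam ^ N) := by
            gcongr
            · rw [tsum_eq_sum (s := W) (fun y hy => if_neg hy)]
              exact le_of_eq (Finset.sum_congr rfl fun y hy => if_pos hy)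
            · calc ENNReal.ofReal (lam ^ N) * ∑' y : Word, sgPk lam C1 C2 n x y
                  ≤ ENNReal.ofReal (lam ^ N) * 1 :=
                    mul_le_mul_right (sgPk_mass hl0 hC1 hC2 n x) _
                _ = _ := mul_one _
    have hgt : Tendsto (fun n => (∑ y ∈ W, sgPk lam C1 C2 n x y) + ENNReal.ofReal (lam ^ N))
        atTop (nhds (0 + ENNReal.ofReal (lam ^ N))) := by
      apply Tendsto.add _ tendsto_const_nhds
      have := tendsto_finset_sum W (fun y _ => tendsto_Pk hl0 hl1 hC1 hC2 x y)
      simpa using this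
    have := le_of_tendsto_of_tendsto' htend hgt hle
    simpa using this
  refine le_antisymm ?_ zero_le
  have h0 : Tendsto (fun N : ℕ => ENNReal.ofReal (lam ^ N)) atTop (nhds 0) := by
    rw [← ENNReal.ofReal_zero]
    exact ENNReal.tendsto_ofReal
      (tendsto_pow_atTop_nhds_zero_of_lt_one hl0.le hl1)
  exact le_of_tendsto_of_tendsto' tendsto_const_nhds h0 hbound

end Aux6

section Aux7
variable {lam C1 C2 : ℝ}
open Filter

lemma G_main (hl0 : 0 < lam) (hl1 : lam < 1) (hC1 : 0 < C1) (hC2 : 0 < C2) (x : Word) :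
    ENNReal.ofReal (1 - lam) * sgG lam C1 C2 x [] = ENNReal.ofReal (lam ^ x.length) := by
  refine le_antisymm (G_bound hl0 hl1 hC1 hC2 x) ?_
  have hle : ∀ n : ℕ, ENNReal.ofReal (lam ^ x.length)
      ≤ hE lam C1 C2 x n + ENNReal.ofReal (1 - lam) * sgG lam C1 C2 x [] := by
    intro n
    rw [hE_sum hl0 hl1 hC1 hC2 x n]
    gcongr
    rw [sgG]
    exact ENNReal.sum_le_tsum _
  have : ENNReal.ofReal (lam ^ x.length)
      ≤ ⨅ n, (hE lam C1 C2 x n + ENNReal.ofReal (1 - lam) * sgG lam C1 C2 x []) :=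
    le_iInf hle
  rwa [← ENNReal.iInf_add, hE_iInf hl0 hl1 hC1 hC2 x, zero_add] at this

lemma G_root (hl0 : 0 < lam) (hl1 : lam < 1) (hC1 : 0 < C1) (hC2 : 0 < C2) :
    sgG lam C1 C2 [] [] = ENNReal.ofReal (1 / (1 - lam)) := by
  have h := G_main hl0 hl1 hC1 hC2 []
  simp only [List.length_nil, pow_zero, ENNReal.ofReal_one] at h
  have hc0 : ENNReal.ofReal (1 - lam) ≠ 0 := by
    simp [ENNReal.ofReal_eq_zero]; linarith
  have hctop : ENNReal.ofReal (1 - lam) ≠ ⊤ := ENNReal.ofReal_ne_top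
  have : sgG lam C1 C2 [] [] = (ENNReal.ofReal (1 - lam))⁻¹ := by
    have h2 := congrArg (fun t => (ENNReal.ofReal (1 - lam))⁻¹ * t) h
    rwa [← mul_assoc, ENNReal.inv_mul_cancel hc0 hctop, one_mul, mul_one] at h2
  rw [this, ← ENNReal.ofReal_inv_of_pos (by linarith), one_div]

lemma sgFk_succ (n : ℕ) (x : Word) :
    sgFk lam C1 C2 (n+1) x
      = if x = [] then 0 else ∑' y : Word, sgP lam C1 C2 x y * sgFk lam C1 C2 n y := rfl

lemma sgFk_zero (x : Word) : sgFk lam C1 C2 0 x = if x = [] then 1 else 0 := rfl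

lemma renewal (hl0 : 0 < lam) (hC1 : 0 < C1) (hC2 : 0 < C2) :
    ∀ (n : ℕ) (x : Word), sgPk lam C1 C2 n x []
      = ∑ k ∈ Finset.range (n+1), sgFk lam C1 C2 k x * sgPk lam C1 C2 (n-k) [] [] := by
  intro n
  induction n with
  | zero =>
    intro x
    rw [Finset.sum_range_one, Nat.sub_zero, sgFk_zero, sgPk_zero, sgPk_zero, if_pos rfl,
      mul_one]
  | succ n ih =>
    intro x
    rw [Finset.sum_range_succ' (fun k => sgFk lam C1 C2 k x * sgPk lam C1 C2 (n+1-k) [] [])]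
    by_cases hx : x = []
    · subst hx
      have h1 : ∀ k ∈ Finset.range (n+1),
          sgFk lam C1 C2 (k+1) [] * sgPk lam C1 C2 (n+1-(k+1)) [] [] = 0 := by
        intro k _
        rw [sgFk_succ, if_pos rfl, zero_mul]
      rw [Finset.sum_congr rfl h1, Finset.sum_const_zero, zero_add, sgFk_zero, if_pos rfl,
        one_mul, Nat.sub_zero]
    · have h1 : ∀ k ∈ Finset.range (n+1),
          sgFk lam C1 C2 (k+1) x * sgPk lam C1 C2 (n+1-(k+1)) [] []
            = (∑' z : Word, sgP lam C1 C2 x z * sgFk lam C1 C2 k z)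
              * sgPk lam C1 C2 (n-k) [] [] := by
        intro k _
        rw [sgFk_succ, if_neg hx, Nat.succ_sub_succ]
      rw [Finset.sum_congr rfl h1, sgFk_zero, if_neg hx, zero_mul, add_zero]
      rw [sgPk_succ]
      calc ∑' z : Word, sgP lam C1 C2 x z * sgPk lam C1 C2 n z []
          = ∑' z : Word, sgP lam C1 C2 x z
              * ∑ k ∈ Finset.range (n+1), sgFk lam C1 C2 k z * sgPk lam C1 C2 (n-k) [] [] :=
            tsum_congr fun z => by rw [ih]
        _ = ∑' z : Word, ∑ k ∈ Finset.range (n+1),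
              sgP lam C1 C2 x z * (sgFk lam C1 C2 k z * sgPk lam C1 C2 (n-k) [] []) :=
            tsum_congr fun z => Finset.mul_sum _ _ _
        _ = ∑ k ∈ Finset.range (n+1), ∑' z : Word,
              sgP lam C1 C2 x z * (sgFk lam C1 C2 k z * sgPk lam C1 C2 (n-k) [] []) :=
            Summable.tsum_finsetSum fun k _ => ENNReal.summable
        _ = ∑ k ∈ Finset.range (n+1),
              (∑' z : Word, sgP lam C1 C2 x z * sgFk lam C1 C2 k z)
                * sgPk lam C1 C2 (n-k) [] [] := by
            refine Finset.sum_congr rfl fun k _ => ?_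
            rw [← ENNReal.tsum_mul_right]
            exact tsum_congr fun z => by ring

lemma G_eq_F_mul_G (hl0 : 0 < lam) (hC1 : 0 < C1) (hC2 : 0 < C2) (x : Word) :
    sgG lam C1 C2 x [] = sgF lam C1 C2 x * sgG lam C1 C2 [] [] := by
  set a : ℕ → ℝ≥0∞ := fun k => sgFk lam C1 C2 k x with ha
  set b : ℕ → ℝ≥0∞ := fun m => sgPk lam C1 C2 m [] [] with hb
  have h1 : sgG lam C1 C2 x []
      = ∑' n : ℕ, ∑ k ∈ Finset.range (n+1), a k * b (n-k) := by
    rw [sgG]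
    exact tsum_congr fun n => renewal hl0 hC1 hC2 n x
  set g : ℕ × ℕ → ℝ≥0∞ := fun q => if q.2 ≤ q.1 then a q.2 * b (q.1 - q.2) else 0 with hg
  have h2 : ∀ n : ℕ, ∑ k ∈ Finset.range (n+1), a k * b (n-k) = ∑' k : ℕ, g (n, k) := by
    intro n
    rw [tsum_eq_sum (s := Finset.range (n+1)) (f := fun k => g (n, k))
      (fun k hk => by
        rw [hg]; simp only
        rw [if_neg]
        simpa [Nat.lt_succ_iff] using hk)]
    refine Finset.sum_congr rfl fun k hk => ?_
    rw [hg]; simp only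
    rw [if_pos (by simpa [Nat.lt_succ_iff] using hk)]
  have h3 : sgG lam C1 C2 x [] = ∑' q : ℕ × ℕ, g q := by
    rw [h1, tsum_congr h2, ← ENNReal.tsum_prod]
  set e : ℕ × ℕ → ℕ × ℕ := fun p => (p.1 + p.2, p.1) with he
  have hinj : Function.Injective e := by
    rintro ⟨p1, p2⟩ ⟨q1, q2⟩ h
    simp only [he, Prod.mk.injEq] at h
    obtain ⟨h1', h2'⟩ := h
    subst h2'
    exact Prod.ext rfl (by omega)
  have hsupp : Function.support g ⊆ Set.range e := by
    intro q hq
    rw [Function.mem_support, hg] at hq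
    simp only at hq
    by_cases hle : q.2 ≤ q.1
    · exact ⟨(q.2, q.1 - q.2), by simp [he, Nat.add_sub_cancel' hle]⟩
    · rw [if_neg hle] at hq; exact absurd rfl hq
  have h4 : ∑' q : ℕ × ℕ, g q = ∑' p : ℕ × ℕ, a p.1 * b p.2 := by
    rw [← hinj.tsum_eq hsupp]
    refine tsum_congr fun p => ?_
    rw [hg, he]
    simp only
    rw [if_pos (Nat.le_add_right _ _), Nat.add_sub_cancel_left]
  have h5 : ∑' p : ℕ × ℕ, a p.1 * b p.2 = (∑' k, a k) * (∑' m, b m) := by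
    rw [ENNReal.tsum_prod (f := fun k m => a k * b m)]
    calc ∑' (k : ℕ), ∑' (m : ℕ), a k * b m = ∑' k, a k * ∑' m, b m :=
          tsum_congr fun k => ENNReal.tsum_mul_left
      _ = (∑' k, a k) * (∑' m, b m) := ENNReal.tsum_mul_right
  rw [h3, h4, h5]
  rfl

end Aux7

/-- For the λ-return ratio random walk on the Sierpiński graph with `λ ∈ (0,1)`:
`G(o,o) = 1/(1-λ)` and `F(x,o) = λ^{|x|}` for every vertex `x`. -/
theorem stmt_13 (lam C1 C2 : ℝ) (hl0 : 0 < lam) (hl1 : lam < 1)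
    (hC1 : 0 < C1) (hC2 : 0 < C2) :
    sgG lam C1 C2 [] [] = ENNReal.ofReal (1 / (1 - lam)) ∧
    ∀ x : Word, sgF lam C1 C2 x = ENNReal.ofReal (lam ^ x.length) := by
  constructor
  · exact G_root hl0 hl1 hC1 hC2
  · intro x
    have hG : sgG lam C1 C2 x [] = sgF lam C1 C2 x * sgG lam C1 C2 [] [] :=
      G_eq_F_mul_G hl0 hC1 hC2 x
    have hmain := G_main hl0 hl1 hC1 hC2 x
    have hcG : ENNReal.ofReal (1 - lam) * sgG lam C1 C2 [] [] = 1 := by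
      have := G_main hl0 hl1 hC1 hC2 []
      simpa using this
    have hkey : ENNReal.ofReal (1 - lam) * sgG lam C1 C2 x [] = sgF lam C1 C2 x := by
      rw [hG]
      calc ENNReal.ofReal (1 - lam) * (sgF lam C1 C2 x * sgG lam C1 C2 [] [])
          = sgF lam C1 C2 x * (ENNReal.ofReal (1 - lam) * sgG lam C1 C2 [] []) := by ring
        _ = sgF lam C1 C2 x := by rw [hcG, mul_one]
    rw [← hkey, hmain]

end
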